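/- Let Λ ⊆ Z^d be a terrace. If x, y ∈ Z^d \ Λ_+, or if x, y ∈ Λ_+ \ Λ, then there is a self-avoiding nearest-neighbour path from x to y that is disjoint from Λ. -/

import Mathlib

open Set

/-- The `i`-th standard basis vector of `ℤ^d`. -/
def eVec (d : ℕ) (i : Fin d) : Fin d → ℤ := Pi.single i 1

/-- `C_+ = ⋃_{z ∈ C} z_+`, where `z_+ = {y : y^[i] ≥ z^[i] for all i}`. -/
def plusSet {d : ℕ} (C : Set (Fin d → ℤ)) : Set (Fin d → ℤ) :=
  {y | ∃ z ∈ C, ∀ i, z i ≤ y i}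

/-- `C_- = ⋃_{z ∈ C} z_-`, where `z_- = {y : y^[i] ≤ z^[i] for all i}`. -/
def minusSet {d : ℕ} (C : Set (Fin d → ℤ)) : Set (Fin d → ℤ) :=
  {y | ∃ z ∈ C, ∀ i, y i ≤ z i}

/-- `C` is saturated: every axis-parallel line meets `C`. -/
def Saturated {d : ℕ} (C : Set (Fin d → ℤ)) : Prop :=
  ∀ (y : Fin d → ℤ) (i : Fin d), ∃ k : ℤ, y + k • eVec d i ∈ C

/-- `C` is solid above: `C_+ = C`. -/
def SolidAbove {d : ℕ} (C : Set (Fin d → ℤ)) : Prop := plusSet C = C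

/-- `C` is bounded below: for every `y` and `i`, `{k : y + k e_i ∈ C}` is bounded below. -/
def BoundedBelow {d : ℕ} (C : Set (Fin d → ℤ)) : Prop :=
  ∀ (y : Fin d → ℤ) (i : Fin d), ∃ m : ℤ, ∀ k : ℤ, y + k • eVec d i ∈ C → m ≤ k

/-- A set is good if it is saturated, solid above, and bounded below. -/
def Good {d : ℕ} (C : Set (Fin d → ℤ)) : Prop :=
  Saturated C ∧ SolidAbove C ∧ BoundedBelow C

/-- `λ_C`: the set of points `γ_C(y,i) = y + k e_i` with `k` smallest such that
`y + k e_i ∈ C`, over all `y ∈ ℤ^d` and `i ∈ [d]`. -/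
def lambdaOf {d : ℕ} (C : Set (Fin d → ℤ)) : Set (Fin d → ℤ) :=
  {z | ∃ (y : Fin d → ℤ) (i : Fin d) (k : ℤ),
    z = y + k • eVec d i ∧ z ∈ C ∧ ∀ k' : ℤ, y + k' • eVec d i ∈ C → k ≤ k'}

/-- A terrace is `λ_C` for some good set `C`. -/
def IsTerrace {d : ℕ} (Λ : Set (Fin d → ℤ)) : Prop :=
  ∃ C : Set (Fin d → ℤ), Good C ∧ Λ = lambdaOf C

/-- The box `[a,b] = {z : a^[i] ≤ z^[i] ≤ b^[i] for all i}`. -/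
def box {d : ℕ} (a b : Fin d → ℤ) : Set (Fin d → ℤ) :=
  {z | ∀ i, a i ≤ z i ∧ z i ≤ b i}

namespace TerraceAux

variable {d : ℕ}

/-- Nearest-neighbour path predicate. -/
def IsPath (d : ℕ) (n : ℕ) (γ : ℕ → Fin d → ℤ) : Prop :=
  ∀ j < n, ∃ i : Fin d, γ (j + 1) = γ j + eVec d i ∨ γ (j + 1) = γ j - eVec d i

/-- Connectivity within a set `S`. -/
def Conn (S : Set (Fin d → ℤ)) (x y : Fin d → ℤ) : Prop :=
  ∃ n γ, γ 0 = x ∧ γ n = y ∧ IsPath d n γ ∧ ∀ j ≤ n, γ j ∈ S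

lemma conn_refl {S : Set (Fin d → ℤ)} {x : Fin d → ℤ} (hx : x ∈ S) : Conn S x x :=
  ⟨0, fun _ => x, rfl, rfl, fun j hj => absurd hj (Nat.not_lt_zero j), fun _ _ => hx⟩

lemma conn_symm {S : Set (Fin d → ℤ)} {x y : Fin d → ℤ} (h : Conn S x y) : Conn S y x := by
  obtain ⟨n, γ, h0, hn, hstep, hS⟩ := h
  refine ⟨n, fun j => γ (n - j), by simp [hn], by simp [h0], ?_, ?_⟩
  · intro j hj
    obtain ⟨i, hi | hi⟩ := hstep (n - j - 1) (by omega)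
    · have e1 : n - j - 1 + 1 = n - j := by omega
      rw [e1] at hi
      refine ⟨i, Or.inr ?_⟩
      have e2 : n - (j + 1) = n - j - 1 := by omega
      simp only [e2, hi]; abel
    · have e1 : n - j - 1 + 1 = n - j := by omega
      rw [e1] at hi
      refine ⟨i, Or.inl ?_⟩
      have e2 : n - (j + 1) = n - j - 1 := by omega
      simp only [e2, hi]; abel
  · intro j _; exact hS _ (by omega)

lemma conn_trans {S : Set (Fin d → ℤ)} {x y z : Fin d → ℤ}
    (h1 : Conn S x y) (h2 : Conn S y z) : Conn S x z := by
  obtain ⟨n, γ, h0, hn, hstep, hS⟩ := h1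
  obtain ⟨m, δ, g0, gm, gstep, gS⟩ := h2
  refine ⟨n + m, fun j => if j < n then γ j else δ (j - n), ?_, ?_, ?_, ?_⟩
  · by_cases h : 0 < n
    · simp [h, h0]
    · have hn0 : n = 0 := by omega
      simp [hn0, g0, ← hn, hn0, h0]
  · have : ¬ (n + m < n) := by omega
    simp [this, gm]
  · intro j hj
    have key : ∀ j' < n, (if j' + 1 < n then γ (j' + 1) else δ (j' + 1 - n)) = γ (j' + 1) := by
      intro j' hj'
      by_cases h : j' + 1 < n
      · simp [h]
      · have : j' + 1 = n := by omega
        simp [this, g0, ← hn]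
    by_cases h : j < n
    · obtain ⟨i, hi⟩ := hstep j h
      refine ⟨i, ?_⟩
      simp only [key j h, h, if_pos h]
      exact hi
    · obtain ⟨i, hi⟩ := gstep (j - n) (by omega)
      refine ⟨i, ?_⟩
      have h1 : ¬ (j + 1 < n) := by omega
      have h2 : j + 1 - n = j - n + 1 := by omega
      simp only [if_neg h, if_neg h1, h2]
      exact hi
  · intro j hj
    by_cases h : j < n
    · simp only [if_pos h]; exact hS _ (by omega)
    · simp only [if_neg h]; exact gS _ (by omega)

/-- Monotone staircase path from `x` down to `z ≤ x`, staying in the box. -/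
lemma descend : ∀ N : ℕ, ∀ x z : Fin d → ℤ, (∀ i, z i ≤ x i) →
    (∑ i, (x i - z i)) = (N : ℤ) →
    ∃ n γ, γ 0 = x ∧ γ n = z ∧ IsPath d n γ ∧ ∀ j ≤ n, ∀ i, z i ≤ γ j i ∧ γ j i ≤ x i := by
  intro N
  induction N with
  | zero =>
    intro x z hle hsum
    have hxz : x = z := by
      funext i
      have h1 : ∀ i ∈ Finset.univ, (0:ℤ) ≤ x i - z i := fun i _ => by linarith [hle i]
      have := (Finset.sum_eq_zero_iff_of_nonneg h1).mp (by simpa using hsum) i (Finset.mem_univ i)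
      linarith
    subst hxz
    exact ⟨0, fun _ => x, rfl, rfl, fun j hj => absurd hj (Nat.not_lt_zero j),
      fun j _ i => ⟨hle i, le_refl _⟩⟩
  | succ N ih =>
    intro x z hle hsum
    have hpos : ∃ i₀, z i₀ < x i₀ := by
      by_contra hc
      push_neg at hc
      have hz : ∀ i ∈ Finset.univ, x i - z i = (0:ℤ) :=
        fun i _ => le_antisymm (by linarith [hc i]) (by linarith [hle i])
      rw [Finset.sum_congr rfl hz] at hsum
      simp at hsum
      omega
    obtain ⟨i₀, hi₀⟩ := hpos
    set x' : Fin d → ℤ := x - eVec d i₀ with hx'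
    have hx'val : ∀ i, x' i = x i - eVec d i₀ i := fun i => rfl
    have hsingle : ∀ i, eVec d i₀ i = if i = i₀ then 1 else 0 := by
      intro i
      by_cases h : i = i₀
      · subst h; simp [eVec]
      · simp [eVec, Pi.single_eq_of_ne h, h]
    have hx'le : ∀ i, x' i ≤ x i := by
      intro i
      rw [hx'val, hsingle]
      split_ifs <;> omega
    have hzle : ∀ i, z i ≤ x' i := by
      intro i
      rw [hx'val, hsingle]
      split_ifs with h
      · subst h; omega
      · simpa using hle i
    have hsum' : (∑ i, (x' i - z i)) = (N : ℤ) := by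
      have h1 : ∑ i, (x' i - z i) = (∑ i, (x i - z i)) - ∑ i, eVec d i₀ i := by
        rw [← Finset.sum_sub_distrib]
        apply Finset.sum_congr rfl
        intro i _
        rw [hx'val]; ring
      have h2 : ∑ i, eVec d i₀ i = 1 := by
        simp only [eVec]
        rw [Finset.sum_pi_single']
        simp
      rw [h1, h2, hsum]
      push_cast
      ring
    obtain ⟨n', γ', hg0, hgn, hgstep, hgbox⟩ := ih x' z hzle hsum'
    refine ⟨n' + 1, fun j => if j = 0 then x else γ' (j - 1), by simp, by simp [hgn], ?_, ?_⟩
    · intro j hj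
      by_cases h : j = 0
      · subst h
        refine ⟨i₀, Or.inr ?_⟩
        simp [hg0]
        exact hx'
      · obtain ⟨m, rfl⟩ : ∃ m, j = m + 1 := ⟨j - 1, by omega⟩
        obtain ⟨i, hi⟩ := hgstep m (by omega)
        refine ⟨i, ?_⟩
        simp only [Nat.add_sub_cancel, if_neg (by omega : ¬ m + 1 + 1 = 0), if_neg h]
        simpa using hi
    · intro j hj i
      by_cases h : j = 0
      · subst h; simp [hle i]
      · simp only [if_neg h]
        obtain ⟨h1, h2⟩ := hgbox (j - 1) (by omega) i
        exact ⟨h1, le_trans h2 (hx'le i)⟩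

/-- Loop erasure: connectivity gives a self-avoiding path. -/
lemma loop_erase {S : Set (Fin d → ℤ)} {x y : Fin d → ℤ} (h : Conn S x y) :
    ∃ n γ, γ 0 = x ∧ γ n = y ∧ IsPath d n γ ∧
      (∀ j ≤ n, ∀ k ≤ n, γ j = γ k → j = k) ∧ ∀ j ≤ n, γ j ∈ S := by
  obtain ⟨n, γ, h0, hn, hstep, hS⟩ := h
  induction n using Nat.strong_induction_on generalizing γ with
  | _ n ih =>
    by_cases hinj : ∀ j ≤ n, ∀ k ≤ n, γ j = γ k → j = k
    · exact ⟨n, γ, h0, hn, hstep, hinj, hS⟩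
    · push_neg at hinj
      obtain ⟨j, hj, k, hk, heq, hne⟩ := hinj
      obtain ⟨a, b, hab, hbn, heqab⟩ : ∃ a b, a < b ∧ b ≤ n ∧ γ a = γ b := by
        rcases lt_or_gt_of_ne hne with h' | h'
        · exact ⟨j, k, h', hk, heq⟩
        · exact ⟨k, j, h', hj, heq.symm⟩
      set n' := a + (n - b) with hn'
      have hlt : n' < n := by omega
      set δ : ℕ → Fin d → ℤ := fun m => if m ≤ a then γ m else γ (m + (b - a)) with hδ
      have hδge : ∀ m, a ≤ m → δ m = γ (m + (b - a)) := by
        intro m hm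
        rw [hδ]
        by_cases h' : m ≤ a
        · have hma : m = a := by omega
          simp only [if_pos h']
          have e3 : a + (b - a) = b := by omega
          rw [hma, e3]
          exact heqab
        · simp [h']
      have hδ0 : δ 0 = x := by rw [hδ]; simp [h0]
      have hδn : δ n' = y := by
        rw [hδge n' (by omega)]
        have : n' + (b - a) = n := by omega
        rw [this, hn]
      have hδstep : IsPath d n' δ := by
        intro m hm
        by_cases h' : m + 1 ≤ a
        · obtain ⟨i, hi⟩ := hstep m (by omega)
          refine ⟨i, ?_⟩
          rw [hδ]
          simp only [if_pos h', if_pos (by omega : m ≤ a)]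
          exact hi
        · have hma : a ≤ m := by omega
          obtain ⟨i, hi⟩ := hstep (m + (b - a)) (by omega)
          refine ⟨i, ?_⟩
          rw [hδge m hma, hδge (m+1) (by omega)]
          have : m + 1 + (b - a) = m + (b - a) + 1 := by omega
          rw [this]
          exact hi
      have hδS : ∀ m ≤ n', δ m ∈ S := by
        intro m hm
        rw [hδ]
        by_cases h' : m ≤ a
        · simp only [if_pos h']; exact hS m (by omega)
        · simp only [if_neg h']; exact hS _ (by omega)
      exact ih n' hlt δ hδ0 hδn hδstep hδS

end TerraceAux

open TerraceAux in
theorem terrace_connected_complement {d : ℕ} (Λ : Set (Fin d → ℤ)) (h : IsTerrace Λ)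
    (x y : Fin d → ℤ)
    (hxy : (x ∉ plusSet Λ ∧ y ∉ plusSet Λ) ∨
      (x ∈ plusSet Λ \ Λ ∧ y ∈ plusSet Λ \ Λ)) :
    ∃ (n : ℕ) (γ : ℕ → Fin d → ℤ), γ 0 = x ∧ γ n = y ∧
      (∀ j < n, ∃ i : Fin d, γ (j + 1) = γ j + eVec d i ∨ γ (j + 1) = γ j - eVec d i) ∧
      (∀ j ≤ n, ∀ k ≤ n, γ j = γ k → j = k) ∧
      (∀ j ≤ n, γ j ∉ Λ) := by
  obtain ⟨C, ⟨hsat, hsolid, hbdd⟩, rfl⟩ := h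
  -- abbreviations
  set Λ := lambdaOf C with hΛ
  -- C is upward closed
  have hup : ∀ {z w : Fin d → ℤ}, z ∈ C → (∀ i, z i ≤ w i) → w ∈ C := by
    intro z w hz hle
    have : w ∈ plusSet C := ⟨z, hz, hle⟩
    rwa [hsolid] at this
  -- Λ ⊆ C
  have hΛC : Λ ⊆ C := by
    rintro z ⟨yy, i, k, _, hzC, _⟩
    exact hzC
  -- membership in Λ from boundary condition
  have hbdry : ∀ {z : Fin d → ℤ}, z ∈ C → (∃ i, z - eVec d i ∉ C) → z ∈ Λ := by
    rintro z hz ⟨i, hi⟩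
    refine ⟨z, i, 0, by simp, hz, ?_⟩
    intro k' hk'
    by_contra hneg
    push_neg at hneg
    apply hi
    apply hup hk'
    intro m
    by_cases h' : m = i
    · subst h'
      simp only [Pi.add_apply, Pi.sub_apply, Pi.smul_apply, smul_eq_mul, eVec, Pi.single_eq_same]
      omega
    · simp [eVec, Pi.single_eq_of_ne h']
  -- Λ members have a boundary direction
  have hΛbdry : ∀ {z : Fin d → ℤ}, z ∈ Λ → ∃ i, z - eVec d i ∉ C := by
    rintro z ⟨yy, i, k, hzeq, hzC, hmin⟩
    refine ⟨i, fun hcon => ?_⟩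
    have : yy + (k - 1) • eVec d i ∈ C := by
      have : yy + (k - 1) • eVec d i = z - eVec d i := by
        rw [hzeq]
        funext m
        simp only [Pi.add_apply, Pi.sub_apply, Pi.smul_apply, smul_eq_mul]
        ring
      rw [this]; exact hcon
    have := hmin (k - 1) this
    omega
  -- case x = y trivial
  by_cases hxyeq : x = y
  · subst hxyeq
    have hxΛ : x ∉ Λ := by
      rcases hxy with ⟨hx, _⟩ | ⟨⟨_, hx⟩, _⟩
      · intro hc
        exact hx ⟨x, hc, fun i => le_refl _⟩
      · exact hx
    refine ⟨0, fun _ => x, rfl, rfl, fun j hj => absurd hj (Nat.not_lt_zero j), ?_, ?_⟩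
    · intro j hj k hk _; omega
    · intro j hj; simpa using hxΛ
  -- now d ≥ 1 since x ≠ y
  have hne : Nonempty (Fin d) := by
    by_contra hc
    apply hxyeq
    funext i
    exact absurd ⟨i⟩ hc
  obtain ⟨i₁⟩ := hne
  -- C ⊆ plusSet Λ
  have hCplus : C ⊆ plusSet Λ := by
    intro z hz
    obtain ⟨m, hm⟩ := hbdd z i₁
    have hbddset : ∃ lb : ℤ, ∀ k ∈ {k : ℤ | z + k • eVec d i₁ ∈ C}, lb ≤ k := ⟨m, hm⟩
    have hmemset : ∃ k : ℤ, k ∈ {k : ℤ | z + k • eVec d i₁ ∈ C} :=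
      ⟨0, by simp only [Set.mem_setOf_eq, zero_smul, add_zero]; exact hz⟩
    obtain ⟨k₀, hk₀mem, hk₀min⟩ := Int.exists_least_of_bdd hbddset hmemset
    refine ⟨z + k₀ • eVec d i₁, ⟨z, i₁, k₀, rfl, hk₀mem, hk₀min⟩, ?_⟩
    have hk₀le : k₀ ≤ 0 := hk₀min 0 (by simp only [Set.mem_setOf_eq, zero_smul, add_zero]; exact hz)
    intro i
    by_cases h' : i = i₁
    · subst h'
      simp only [Pi.add_apply, Pi.smul_apply, smul_eq_mul, eVec, Pi.single_eq_same]
      omega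
    · simp [eVec, Pi.single_eq_of_ne h']
  have hplusC : plusSet Λ = C := by
    apply Set.Subset.antisymm
    · rintro w ⟨z, hz, hle⟩
      exact hup (hΛC hz) hle
    · exact hCplus
  rcases hxy with ⟨hx, hy⟩ | ⟨⟨hxP, hxΛ⟩, ⟨hyP, hyΛ⟩⟩
  · -- Case 1: x, y ∉ C; use S = Cᶜ, downward closed
    rw [hplusC] at hx hy
    set S : Set (Fin d → ℤ) := Cᶜ with hs
    have hdown : ∀ {z w : Fin d → ℤ}, z ∈ S → (∀ i, w i ≤ z i) → w ∈ S := by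
      intro z w hz hle hcon
      exact hz (hup hcon hle)
    set mpt : Fin d → ℤ := fun i => min (x i) (y i) with hmpt
    have hmx : ∀ i, mpt i ≤ x i := fun i => min_le_left _ _
    have hmy : ∀ i, mpt i ≤ y i := fun i => min_le_right _ _
    have hsum1 : (∑ i, (x i - mpt i)) = (((∑ i, (x i - mpt i)).toNat : ℤ)) := by
      rw [Int.toNat_of_nonneg]
      apply Finset.sum_nonneg
      intro i _
      linarith [hmx i]
    have hsum2 : (∑ i, (y i - mpt i)) = (((∑ i, (y i - mpt i)).toNat : ℤ)) := by
      rw [Int.toNat_of_nonneg]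
      apply Finset.sum_nonneg
      intro i _
      linarith [hmy i]
    obtain ⟨n1, γ1, hA0, hAn, hAstep, hAbox⟩ := descend _ x mpt hmx hsum1
    obtain ⟨n2, γ2, hB0, hBn, hBstep, hBbox⟩ := descend _ y mpt hmy hsum2
    have c1 : Conn S x mpt :=
      ⟨n1, γ1, hA0, hAn, hAstep, fun j hj => hdown hx (fun i => (hAbox j hj i).2)⟩
    have c2 : Conn S y mpt :=
      ⟨n2, γ2, hB0, hBn, hBstep, fun j hj => hdown hy (fun i => (hBbox j hj i).2)⟩
    obtain ⟨n, γ, p0, pn, pstep, pinj, pS⟩ := loop_erase (conn_trans c1 (conn_symm c2))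
    exact ⟨n, γ, p0, pn, pstep, pinj, fun j hj hc => (pS j hj) (hΛC hc)⟩
  · -- Case 2: x, y ∈ C \ Λ; use S = C \ Λ, upward closed
    have hxC : x ∈ C := by rw [← hplusC]; exact hxP
    have hyC : y ∈ C := by rw [← hplusC]; exact hyP
    set S : Set (Fin d → ℤ) := C \ Λ with hs
    have hupS : ∀ {z w : Fin d → ℤ}, z ∈ S → (∀ i, z i ≤ w i) → w ∈ S := by
      rintro z w ⟨hzC, hzΛ⟩ hle
      refine ⟨hup hzC hle, ?_⟩
      intro hwΛ
      obtain ⟨i, hi⟩ := hΛbdry hwΛ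
      apply hi
      have hz' : z - eVec d i ∈ C := by
        by_contra hc
        exact hzΛ (hbdry hzC ⟨i, hc⟩)
      apply hup hz'
      intro m
      simp only [Pi.sub_apply]
      linarith [hle m]
    set Mpt : Fin d → ℤ := fun i => max (x i) (y i) with hMpt
    have hMx : ∀ i, x i ≤ Mpt i := fun i => le_max_left _ _
    have hMy : ∀ i, y i ≤ Mpt i := fun i => le_max_right _ _
    have hsum1 : (∑ i, (Mpt i - x i)) = (((∑ i, (Mpt i - x i)).toNat : ℤ)) := by
      rw [Int.toNat_of_nonneg]
      apply Finset.sum_nonneg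
      intro i _
      linarith [hMx i]
    have hsum2 : (∑ i, (Mpt i - y i)) = (((∑ i, (Mpt i - y i)).toNat : ℤ)) := by
      rw [Int.toNat_of_nonneg]
      apply Finset.sum_nonneg
      intro i _
      linarith [hMy i]
    obtain ⟨n1, γ1, hA0, hAn, hAstep, hAbox⟩ := descend _ Mpt x hMx hsum1
    obtain ⟨n2, γ2, hB0, hBn, hBstep, hBbox⟩ := descend _ Mpt y hMy hsum2
    have hxS : x ∈ S := ⟨hxC, hxΛ⟩
    have hyS : y ∈ S := ⟨hyC, hyΛ⟩
    have c1 : Conn S Mpt x :=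
      ⟨n1, γ1, hA0, hAn, hAstep, fun j hj => hupS hxS (fun i => (hAbox j hj i).1)⟩
    have c2 : Conn S Mpt y :=
      ⟨n2, γ2, hB0, hBn, hBstep, fun j hj => hupS hyS (fun i => (hBbox j hj i).1)⟩
    obtain ⟨n, γ, p0, pn, pstep, pinj, pS⟩ := loop_erase (conn_trans (conn_symm c1) c2)
    exact ⟨n, γ, p0, pn, pstep, pinj, fun j hj hc => (pS j hj).2 hc⟩
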